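/- arXiv:2507.05039 — 2 statements merged into one kernel-verified Lean document; each statement's English description precedes it below -/
import Mathlib

section
/- Let $\alpha\in[0,1)$, and define $\mu(x)=\langle x\rangle^{2-\alpha}=(1+|x|^2)^{(2-\alpha)/2}$ on $\mathbb{R}^d$ and $k_\alpha=\langle k\rangle^{\alpha/(1-\alpha)}k$ for $k\in\mathbb{Z}^d$. Then $|\nabla\mu(k_\alpha)-(2-\alpha)k|\le \frac{C\alpha(2-\alpha)}{1-\alpha}|k|^{-1}$ for all $k\ne 0$, for some absolute constant $C$. -/
open MeasureTheory

/-- The lattice point `k` viewed as a vector in `ℝ^d`. -/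
noncomputable def intVec (d : ℕ) (k : Fin d → ℤ) : EuclideanSpace ℝ (Fin d) :=
  WithLp.toLp 2 (fun i => (k i : ℝ))

/-- The gradient of `μ(x) = ⟨x⟩^{2-α}`, namely `∇μ(x) = (2-α)⟨x⟩^{-α} x`. -/
noncomputable def gradMu (d : ℕ) (α : ℝ) (x : EuclideanSpace ℝ (Fin d)) :
    EuclideanSpace ℝ (Fin d) :=
  ((2 - α) * (1 + ‖x‖ ^ 2) ^ (-α / 2)) • x

/-- The scaled lattice point `k_α = ⟨k⟩^{α/(1-α)} k`. -/
noncomputable def kAlpha (d : ℕ) (α : ℝ) (k : Fin d → ℤ) : EuclideanSpace ℝ (Fin d) :=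
  ((1 + ‖intVec d k‖ ^ 2) ^ ((α / (1 - α)) / 2)) • intVec d k

set_option maxHeartbeats 1000000 in
/-- `|∇μ(k_α) - (2-α)k| ≤ C α(2-α)/(1-α) · |k|⁻¹` for an absolute constant `C`. -/
theorem gradMu_kAlpha_approx :
    ∃ C : ℝ, 0 < C ∧ ∀ (d : ℕ) (α : ℝ), 0 ≤ α → α < 1 →
      ∀ k : Fin d → ℤ, k ≠ 0 →
        ‖gradMu d α (kAlpha d α k) - (2 - α) • intVec d k‖
          ≤ C * α * (2 - α) / (1 - α) * ‖intVec d k‖⁻¹ := by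
  refine ⟨1/2, by norm_num, ?_⟩
  intro d α hα hα1 k hk
  have hα2 : (0:ℝ) < 1 - α := by linarith
  set v := intVec d k with hv
  -- `1 ≤ ‖v‖²`
  obtain ⟨i, hi⟩ : ∃ i, k i ≠ 0 := by
    by_contra h; push_neg at h; exact hk (funext h)
  have ht1 : (1:ℝ) ≤ ‖v‖ ^ 2 := by
    have h1 : ‖v‖ ^ 2 = ∑ j, ‖v j‖ ^ 2 := by
      rw [EuclideanSpace.norm_eq, Real.sq_sqrt (by positivity)]
    have h2 : (1:ℝ) ≤ ‖v i‖ ^ 2 := by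
      have hvi : v i = (k i : ℝ) := by simp [hv, intVec]
      have h0 : (1:ℤ) ≤ |k i| := Int.one_le_abs hi
      have h3 : (1:ℝ) ≤ |(k i : ℝ)| := by
        rw [← Int.cast_abs]; exact_mod_cast h0
      rw [hvi, Real.norm_eq_abs]
      nlinarith
    rw [h1]
    calc (1:ℝ) ≤ ‖v i‖ ^ 2 := h2
      _ ≤ ∑ j, ‖v j‖ ^ 2 :=
          Finset.single_le_sum (f := fun j => ‖v j‖ ^ 2) (fun j _ => by positivity)
            (Finset.mem_univ i)
  have hvn : (1:ℝ) ≤ ‖v‖ := by nlinarith [norm_nonneg v]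
  have hvpos : (0:ℝ) < ‖v‖ := lt_of_lt_of_le one_pos hvn
  set t : ℝ := ‖v‖ ^ 2 with htdef
  set β : ℝ := α / (1 - α) with hβ
  have hβ0 : 0 ≤ β := by positivity
  set s : ℝ := 1 + t with hsdef
  have hs : (0:ℝ) < s := by simp only [hsdef]; nlinarith
  have hs1 : (1:ℝ) ≤ s := by simp only [hsdef]; nlinarith
  have ht0 : (0:ℝ) < t := by nlinarith
  -- norm of kAlpha squared
  have hcpos : (0:ℝ) < s ^ (β / 2) := Real.rpow_pos_of_pos hs _
  have hka : kAlpha d α k = (s ^ (β / 2)) • v := rfl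
  have hkanorm : ‖kAlpha d α k‖ ^ 2 = s ^ β * t := by
    rw [hka, norm_smul, mul_pow, Real.norm_eq_abs, abs_of_pos hcpos, ← htdef,
      ← Real.rpow_natCast (s ^ (β / 2)) 2, ← Real.rpow_mul hs.le]
    try norm_num
  set A : ℝ := 1 + s ^ β * t with hAdef
  have hA0 : (0:ℝ) < A := by positivity
  -- key exponent identity
  have hexp : (β + 1) * (α / 2) = β / 2 := by
    rw [hβ]; field_simp; try ring
  have hsβ1 : s ^ (β + 1) = s ^ β * s := by
    rw [Real.rpow_add hs, Real.rpow_one]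
  have hsβge : (1:ℝ) ≤ s ^ β := Real.one_le_rpow hs1 hβ0
  -- (A) : A^(α/2) ≤ s^(β/2)
  have hAle : A ≤ s ^ (β + 1) := by
    rw [hsβ1, hAdef, hsdef]; nlinarith
  have hA : A ^ (α / 2) ≤ s ^ (β / 2) := by
    calc A ^ (α / 2) ≤ (s ^ (β + 1)) ^ (α / 2) :=
          Real.rpow_le_rpow hA0.le hAle (by positivity)
      _ = s ^ ((β + 1) * (α / 2)) := by rw [← Real.rpow_mul hs.le]
      _ = s ^ (β / 2) := by rw [hexp]
  -- (B) : s^(β/2) ≤ A^(α/2) * (s/t)^(α/2)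
  have hB : s ^ (β / 2) ≤ A ^ (α / 2) * (s / t) ^ (α / 2) := by
    have hge : s ^ (β + 1) ≤ A * (s / t) := by
      have h1 : s ^ β * t ≤ A := by rw [hAdef]; linarith
      have h2 : s ^ β * t * (s / t) = s ^ (β + 1) := by
        rw [hsβ1]; field_simp
      calc s ^ (β + 1) = s ^ β * t * (s / t) := h2.symm
        _ ≤ A * (s / t) := by
            apply mul_le_mul_of_nonneg_right h1 (by positivity)
    calc s ^ (β / 2) = s ^ ((β + 1) * (α / 2)) := by rw [hexp]
      _ = (s ^ (β + 1)) ^ (α / 2) := by rw [← Real.rpow_mul hs.le]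
      _ ≤ (A * (s / t)) ^ (α / 2) :=
          Real.rpow_le_rpow (by positivity) hge (by positivity)
      _ = A ^ (α / 2) * (s / t) ^ (α / 2) := Real.mul_rpow hA0.le (by positivity)
  -- the quantity f
  set f : ℝ := A ^ (-α / 2) * s ^ (β / 2) with hfdef
  have hArpow : A ^ (-α / 2) = (A ^ (α / 2))⁻¹ := by
    rw [← Real.rpow_neg hA0.le]; ring_nf
  have hApow_pos : (0:ℝ) < A ^ (α / 2) := Real.rpow_pos_of_pos hA0 _
  have hf1 : (1:ℝ) ≤ f := by
    rw [hfdef, hArpow, inv_mul_eq_div, le_div_iff₀ hApow_pos, one_mul]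
    exact hA
  have hfle : f ≤ 1 + (α / 2) * t⁻¹ := by
    have h1 : f ≤ (s / t) ^ (α / 2) := by
      rw [hfdef, hArpow, inv_mul_eq_div, div_le_iff₀ hApow_pos]
      calc s ^ (β / 2) ≤ A ^ (α / 2) * (s / t) ^ (α / 2) := hB
        _ = (s / t) ^ (α / 2) * A ^ (α / 2) := by ring
    have h2 : s / t = 1 + t⁻¹ := by
      rw [hsdef]; field_simp; ring
    have h3 : (s / t) ^ (α / 2) ≤ 1 + (α / 2) * t⁻¹ := by
      rw [h2]
      exact rpow_one_add_le_one_add_mul_self (le_trans (by norm_num) (inv_nonneg.mpr ht0.le)) (by positivity)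
        (by linarith)
    linarith
  -- compute the difference
  have hdiff : gradMu d α (kAlpha d α k) - (2 - α) • v = ((2 - α) * (f - 1)) • v := by
    have e1 : (1:ℝ) + ‖kAlpha d α k‖ ^ 2 = A := by rw [hkanorm]
    show ((2 - α) * (1 + ‖kAlpha d α k‖ ^ 2) ^ (-α / 2)) • kAlpha d α k
        - (2 - α) • v = _
    rw [e1, hka, smul_smul, ← sub_smul]
    congr 1
    rw [hfdef]; ring
  rw [hdiff, norm_smul, Real.norm_eq_abs]
  have h2α : (0:ℝ) ≤ 2 - α := by linarith
  have habs : |(2 - α) * (f - 1)| = (2 - α) * (f - 1) := abs_of_nonneg (by nlinarith)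
  rw [habs]
  have hbound : (2 - α) * (f - 1) * ‖v‖ ≤ (2 - α) * ((α / 2) * t⁻¹) * ‖v‖ := by
    apply mul_le_mul_of_nonneg_right _ (norm_nonneg v)
    apply mul_le_mul_of_nonneg_left _ h2α
    linarith
  have hinv : t⁻¹ * ‖v‖ = ‖v‖⁻¹ := by
    rw [htdef]; field_simp
  calc (2 - α) * (f - 1) * ‖v‖ ≤ (2 - α) * ((α / 2) * t⁻¹) * ‖v‖ := hbound
    _ = (α * (2 - α) / 2) * (t⁻¹ * ‖v‖) := by ring
    _ = (α * (2 - α) / 2) * ‖v‖⁻¹ := by rw [hinv]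
    _ ≤ 1 / 2 * α * (2 - α) / (1 - α) * ‖v‖⁻¹ := by
        apply mul_le_mul_of_nonneg_right _ (by positivity)
        rw [div_le_div_iff₀ (by norm_num) hα2]
        nlinarith [mul_nonneg (mul_nonneg hα hα) h2α]
end

section
/- Let $\alpha\in[0,1)$, $\mu(x)=\langle x\rangle^{2-\alpha}$ on $\mathbb{R}^d$, and $k_\alpha=\langle k\rangle^{\alpha/(1-\alpha)}k$. For any sufficiently small $r>0$ there exists $R>0$ such that for all $k\ne l$ in $\mathbb{Z}^d$ with $|k|,|l|>R$, the balls $B(\nabla\mu(k_\alpha),r)$ and $B(\nabla\mu(l_\alpha),r)$ are disjoint. -/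
open MeasureTheory Metric

lemma key_est (d : ℕ) (α : ℝ) (hα : 0 ≤ α) (hα1 : α < 1) (v : EuclideanSpace ℝ (Fin d))
    (hv : 1 ≤ ‖v‖) :
    ‖gradMu d α (((1 + ‖v‖ ^ 2) ^ ((α / (1 - α)) / 2)) • v) - (2 - α) • v‖ ≤ 1 / ‖v‖ := by
  have h1α : (0:ℝ) < 1 - α := by linarith
  set n : ℝ := ‖v‖ ^ 2 with hn_def
  have hn : 1 ≤ n := by
    have := one_le_pow₀ hv (n := 2)
    simpa [hn_def] using this
  have hn0 : 0 < n := by linarith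
  have h1n : (0:ℝ) < 1 + n := by linarith
  set γ : ℝ := α / (1 - α) with hγ_def
  have hγ : 0 ≤ γ := div_nonneg hα h1α.le
  set c : ℝ := (1 + n) ^ (γ / 2) with hc_def
  have hc0 : 0 < c := Real.rpow_pos_of_pos h1n _
  have hc2 : c ^ 2 = (1 + n) ^ γ := by
    rw [hc_def, ← Real.rpow_natCast ((1+n) ^ (γ/2)) 2, ← Real.rpow_mul h1n.le]
    norm_num
  have hnormcv : ‖c • v‖ ^ 2 = (1 + n) ^ γ * n := by
    rw [norm_smul, mul_pow, Real.norm_eq_abs, sq_abs, hc2, hn_def]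
  set A : ℝ := 1 + (1 + n) ^ γ * n with hA_def
  have hA0 : 0 < A := by positivity
  set B : ℝ := (1 + n) ^ (γ + 1) with hB_def
  have hB0 : 0 < B := Real.rpow_pos_of_pos h1n _
  have hpow1 : (1:ℝ) ≤ (1 + n) ^ γ := Real.one_le_rpow (by linarith) hγ
  have hBeq : B = (1 + n) ^ γ * n + (1 + n) ^ γ := by
    rw [hB_def, Real.rpow_add h1n, Real.rpow_one]; ring
  have hAB : A ≤ B := by rw [hBeq, hA_def]; linarith
  have hBA : B ≤ A * (1 + 1 / n) := by
    have h1 : (1 + n) ^ γ ≤ A / n := by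
      rw [le_div_iff₀ hn0, hA_def]
      nlinarith [Real.rpow_pos_of_pos h1n γ]
    have : A * (1 + 1 / n) = A + A / n := by field_simp
    rw [this, hBeq]
    have h2 : (1 + n) ^ γ * n ≤ A := by rw [hA_def]; linarith
    linarith
  -- c = B ^ (α/2)
  have hγid : γ / 2 = (γ + 1) * (α / 2) := by
    rw [hγ_def]; field_simp; ring
  have hcB : c = B ^ (α / 2) := by
    rw [hc_def, hγid, Real.rpow_mul h1n.le, hB_def]
  -- compute gradMu
  have hgrad : gradMu d α (c • v) - (2 - α) • v
      = (((2 - α) * A ^ (-α / 2) * c) - (2 - α)) • v := by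
    rw [gradMu, hnormcv, smul_smul, ← sub_smul, hA_def]
  set t : ℝ := B / A with ht_def
  have ht1 : 1 ≤ t := (one_le_div hA0).2 hAB
  have ht2 : t ≤ 1 + 1 / n := (div_le_iff₀ hA0).2 (by linarith [hBA])
  have hfactor : A ^ (-α / 2) * c = t ^ (α / 2) := by
    rw [hcB, ht_def, Real.div_rpow hB0.le hA0.le, neg_div, Real.rpow_neg hA0.le]
    field_simp
  have htα1 : 1 ≤ t ^ (α / 2) := Real.one_le_rpow ht1 (by linarith)
  have htα2 : t ^ (α / 2) ≤ 1 + 1 / (2 * n) := by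
    have h1 : t ^ (α / 2) ≤ t ^ ((1:ℝ) / 2) :=
      Real.rpow_le_rpow_of_exponent_le ht1 (by linarith)
    have h2 : t ^ ((1:ℝ)/2) = Real.sqrt t := (Real.sqrt_eq_rpow t).symm
    have h3 : Real.sqrt t ≤ 1 + 1 / (2 * n) := by
      have hb : (0:ℝ) ≤ 1 + 1 / (2 * n) := by positivity
      rw [show Real.sqrt t ≤ 1 + 1/(2*n) ↔ Real.sqrt t ≤ 1 + 1/(2*n) from Iff.rfl]
      have : t ≤ (1 + 1 / (2 * n)) ^ 2 := by
        have : (1 + 1/(2*n))^2 = 1 + 1/n + (1/(2*n))^2 := by field_simp; ring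
        nlinarith [sq_nonneg (1/(2*n))]
      calc Real.sqrt t ≤ Real.sqrt ((1 + 1/(2*n))^2) := Real.sqrt_le_sqrt this
        _ = 1 + 1/(2*n) := Real.sqrt_sq hb
    linarith
  have hcoef : 0 ≤ (2 - α) * A ^ (-α / 2) * c - (2 - α) ∧
      (2 - α) * A ^ (-α / 2) * c - (2 - α) ≤ 1 / n := by
    have h2α : (0:ℝ) < 2 - α := by linarith
    have heq : (2 - α) * A ^ (-α / 2) * c = (2 - α) * t ^ (α / 2) := by
      rw [mul_assoc, hfactor]
    constructor
    · rw [heq]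
      have := mul_le_mul_of_nonneg_left htα1 h2α.le
      linarith
    · rw [heq]
      have : (2 - α) * t ^ (α / 2) - (2 - α) = (2 - α) * (t ^ (α / 2) - 1) := by ring
      rw [this]
      have h4 : t ^ (α / 2) - 1 ≤ 1 / (2 * n) := by linarith
      have h5 : (2 - α) * (t ^ (α/2) - 1) ≤ 2 * (1 / (2 * n)) :=
        mul_le_mul (by linarith) h4 (by linarith) (by norm_num)
      calc (2 - α) * (t ^ (α/2) - 1) ≤ 2 * (1 / (2 * n)) := h5
        _ = 1 / n := by field_simp
  rw [hgrad, norm_smul, Real.norm_eq_abs, abs_of_nonneg hcoef.1]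
  have hv0 : 0 < ‖v‖ := by linarith
  calc ((2 - α) * A ^ (-α / 2) * c - (2 - α)) * ‖v‖ ≤ (1 / n) * ‖v‖ :=
        mul_le_mul_of_nonneg_right hcoef.2 (norm_nonneg v)
    _ = 1 / ‖v‖ := by rw [hn_def]; field_simp

lemma lattice_sep (d : ℕ) (k l : Fin d → ℤ) (h : k ≠ l) :
    1 ≤ ‖intVec d k - intVec d l‖ := by
  obtain ⟨i, hi⟩ := Function.ne_iff.1 h
  set x : EuclideanSpace ℝ (Fin d) := intVec d k - intVec d l with hx
  have hxi : x i = (k i : ℝ) - (l i : ℝ) := rfl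
  have h1 : (1:ℝ) ≤ ‖x i‖ ^ 2 := by
    rw [hxi, Real.norm_eq_abs]
    have : (1:ℤ) ≤ |k i - l i| := Int.one_le_abs (sub_ne_zero.2 hi)
    have h2 : (1:ℝ) ≤ |((k i - l i : ℤ) : ℝ)| := by
      rw [← Int.cast_abs]; exact_mod_cast this
    push_cast at h2
    nlinarith [abs_nonneg ((k i : ℝ) - l i)]
  have h2 : (1:ℝ) ≤ ∑ j, ‖x j‖ ^ 2 := by
    exact le_trans h1 (Finset.single_le_sum (f := fun j => ‖x j‖ ^ 2) (fun j _ => by positivity) (Finset.mem_univ i))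
  rw [EuclideanSpace.norm_eq]
  calc (1:ℝ) = Real.sqrt 1 := (Real.sqrt_one).symm
    _ ≤ Real.sqrt (∑ j, ‖x j‖ ^ 2) := Real.sqrt_le_sqrt h2

/-- For any sufficiently small `r > 0` there is `R > 0` such that the balls
`B(∇μ(k_α), r)` for `|k| > R` are pairwise disjoint. -/
theorem gradMu_kAlpha_balls_disjoint (d : ℕ) (hd : 1 ≤ d) (α : ℝ) (hα : 0 ≤ α) (hα1 : α < 1) :
    ∃ r₀ : ℝ, 0 < r₀ ∧ ∀ r : ℝ, 0 < r → r < r₀ →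
      ∃ R : ℝ, 0 < R ∧ ∀ k l : Fin d → ℤ, k ≠ l →
        R < ‖intVec d k‖ → R < ‖intVec d l‖ →
        Disjoint (ball (gradMu d α (kAlpha d α k)) r) (ball (gradMu d α (kAlpha d α l)) r) := by
  refine ⟨1/4, by norm_num, fun r hr hr4 => ⟨max 1 (1/r), lt_of_lt_of_le one_pos (le_max_left _ _), fun k l hkl hk hl => ?_⟩⟩
  set vk := intVec d k
  set vl := intVec d l
  have hk1 : 1 ≤ ‖vk‖ := le_of_lt (lt_of_le_of_lt (le_max_left _ _) hk)
  have hl1 : 1 ≤ ‖vl‖ := le_of_lt (lt_of_le_of_lt (le_max_left _ _) hl)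
  have hkr : 1/r < ‖vk‖ := lt_of_le_of_lt (le_max_right _ _) hk
  have hlr : 1/r < ‖vl‖ := lt_of_le_of_lt (le_max_right _ _) hl
  have hek : 1 / ‖vk‖ < r := by
    rw [div_lt_iff₀ (by linarith : (0:ℝ) < ‖vk‖)]
    rw [div_lt_iff₀ hr] at hkr
    linarith [mul_comm r ‖vk‖]
  have hel : 1 / ‖vl‖ < r := by
    rw [div_lt_iff₀ (by linarith : (0:ℝ) < ‖vl‖)]
    rw [div_lt_iff₀ hr] at hlr
    linarith [mul_comm r ‖vl‖]
  set a := gradMu d α (kAlpha d α k)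
  set b := gradMu d α (kAlpha d α l)
  have hka : a - (2 - α) • vk = gradMu d α (((1 + ‖vk‖ ^ 2) ^ ((α / (1 - α)) / 2)) • vk) - (2 - α) • vk := rfl
  have hEa : ‖a - (2 - α) • vk‖ ≤ 1 / ‖vk‖ := by rw [hka]; exact key_est d α hα hα1 vk hk1
  have hEb : ‖b - (2 - α) • vl‖ ≤ 1 / ‖vl‖ := key_est d α hα hα1 vl hl1
  have hsep : 1 ≤ ‖(2 - α) • (vk - vl)‖ := by
    rw [norm_smul, Real.norm_eq_abs, abs_of_nonneg (by linarith : (0:ℝ) ≤ 2 - α)]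
    have h1 := lattice_sep d k l hkl
    nlinarith
  apply ball_disjoint_ball
  rw [dist_eq_norm]
  have hdecomp : (2 - α) • (vk - vl) = (a - b) - (a - (2 - α) • vk) + (b - (2 - α) • vl) := by
    rw [smul_sub]; abel
  have htri : ‖(2 - α) • (vk - vl)‖ ≤ ‖a - b‖ + ‖a - (2 - α) • vk‖ + ‖b - (2 - α) • vl‖ := by
    rw [hdecomp]
    calc ‖(a - b) - (a - (2 - α) • vk) + (b - (2 - α) • vl)‖
        ≤ ‖(a - b) - (a - (2 - α) • vk)‖ + ‖b - (2 - α) • vl‖ := norm_add_le _ _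
      _ ≤ ‖a - b‖ + ‖a - (2 - α) • vk‖ + ‖b - (2 - α) • vl‖ := by
          linarith [norm_sub_le (a - b) (a - (2 - α) • vk)]
  linarith
end
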